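/- Let H be a Hopf algebra of dimension d over an algebraically closed field F and let D be a division algebra over F of degree m which is an H-module algebra with gcd(d!, m) = 1. Then the centralizer of D^H in D equals the center Z of D. -/

import Mathlib

open TensorProduct

/-- An action of a (bi/Hopf) algebra `H` on an algebra `A`, where the comultiplication and
counit of `H` are supplied explicitly as `comul` and `counit`.  This says exactly that `A`
is an `H`-module algebra:  `h ⬝ (ab) = ∑ (h₁ ⬝ a)(h₂ ⬝ b)` and `h ⬝ 1 = ε(h) 1`. -/
structure ModAlgAction (k : Type) [CommRing k] (H : Type) [Ring H] [Module k H]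
    (comul : H →ₗ[k] H ⊗[k] H) (counit : H →ₗ[k] k)
    (A : Type) [Ring A] [Algebra k A] where
  /-- the action map -/
  act : H →ₗ[k] A →ₗ[k] A
  one_act : ∀ a : A, act 1 a = a
  mul_act : ∀ (g h : H) (a : A), act (g * h) a = act g (act h a)
  act_one : ∀ h : H, act h 1 = algebraMap k A (counit h)
  act_mul : ∀ (h : H) (a b : A), act h (a * b) =
    TensorProduct.lift (((LinearMap.mul k A).comp (act.flip a)).compl₂ (act.flip b)) (comul h)

/-- An action of a Hopf algebra `H` on an algebra `A`, i.e. an `H`-module algebra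
structure on `A`. -/
abbrev HopfAction (k : Type) [CommRing k] (H : Type) [Ring H] [Bialgebra k H]
    (A : Type) [Ring A] [Algebra k A] :=
  ModAlgAction k H (Coalgebra.comul (R := k)) (Coalgebra.counit (R := k)) A

/-- The `k`-subspace `I ⊗ H + H ⊗ I` of `H ⊗ H` determined by a subspace `I ⊆ H`. -/
noncomputable def tensorIdeal (k : Type) [CommRing k] (H : Type) [Ring H] [Module k H]
    (I : Submodule k H) : Submodule k (H ⊗[k] H) :=
  Submodule.span k {z : H ⊗[k] H |
    (∃ a ∈ I, ∃ b : H, z = a ⊗ₜ[k] b) ∨ (∃ a : H, ∃ b ∈ I, z = a ⊗ₜ[k] b)}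

/-- A (two-sided) Hopf ideal of `H`, with respect to explicitly supplied comultiplication,
counit and antipode. -/
def IsHopfIdealWith (k : Type) [CommRing k] (H : Type) [Ring H] [Module k H]
    (comul : H →ₗ[k] H ⊗[k] H) (counit : H →ₗ[k] k) (antipode : H →ₗ[k] H)
    (I : Submodule k H) : Prop :=
  (∀ x ∈ I, ∀ h : H, h * x ∈ I ∧ x * h ∈ I) ∧
  (∀ x ∈ I, comul x ∈ tensorIdeal k H I) ∧
  (∀ x ∈ I, counit x = 0) ∧
  (∀ x ∈ I, antipode x ∈ I)

/-- A Hopf ideal of a Hopf algebra `H`. -/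
abbrev IsHopfIdeal (k : Type) [CommRing k] (H : Type) [Ring H] [HopfAlgebra k H]
    (I : Submodule k H) : Prop :=
  IsHopfIdealWith k H (Coalgebra.comul (R := k)) (Coalgebra.counit (R := k))
    (HopfAlgebra.antipode (R := k)) I

/-- Inner faithfulness of an action map `act`: no nonzero Hopf ideal annihilates `A`. -/
def InnerFaithfulWith (k : Type) [CommRing k] (H : Type) [Ring H] [Module k H]
    (comul : H →ₗ[k] H ⊗[k] H) (counit : H →ₗ[k] k) (antipode : H →ₗ[k] H)
    (A : Type) [Ring A] [Algebra k A] (act : H →ₗ[k] A →ₗ[k] A) : Prop :=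
  ∀ I : Submodule k H, IsHopfIdealWith k H comul counit antipode I →
    (∀ x ∈ I, ∀ a : A, act x a = 0) → I = ⊥

/-- Inner faithfulness of a Hopf algebra action: no nonzero Hopf ideal of `H` acts by zero. -/
abbrev HopfAction.InnerFaithful {k : Type} [CommRing k] {H : Type} [Ring H] [HopfAlgebra k H]
    {A : Type} [Ring A] [Algebra k A] (ha : HopfAction k H A) : Prop :=
  InnerFaithfulWith k H (Coalgebra.comul (R := k)) (Coalgebra.counit (R := k))
    (HopfAlgebra.antipode (R := k)) A ha.act

/-- The set of invariants of an action. -/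
def ModAlgAction.invariants {k : Type} [CommRing k] {H : Type} [Ring H] [Module k H]
    {comul : H →ₗ[k] H ⊗[k] H} {counit : H →ₗ[k] k}
    {A : Type} [Ring A] [Algebra k A] (ha : ModAlgAction k H comul counit A) : Set A :=
  {a : A | ∀ h : H, ha.act h a = counit h • a}

/-- The kernel of an action, as a subspace of `H`. -/
noncomputable def ModAlgAction.actionKernel {k : Type} [CommRing k] {H : Type} [Ring H]
    [Module k H] {comul : H →ₗ[k] H ⊗[k] H} {counit : H →ₗ[k] k}
    {A : Type} [Ring A] [Algebra k A] (ha : ModAlgAction k H comul counit A) :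
    Submodule k H :=
  ⨅ a : A, LinearMap.ker (ha.act.flip a)

section HopfAux

open Coalgebra MulOpposite

variable {F : Type} [Field F] {H : Type} [Ring H] [HopfAlgebra F H]
  {D : Type} [DivisionRing D] [Algebra F D] (ha : HopfAction F H D)

lemma act_mul_repr (h : H) (r : Coalgebra.Repr F h (H × H)) (a b : D) :
    ha.act h (a * b) = ∑ i ∈ r.index, ha.act (r.left i) a * ha.act (r.right i) b := by
  rw [ha.act_mul, ← r.eq, map_sum]
  simp [TensorProduct.lift.tmul]

lemma repr_sum_left (h : H) (r : Coalgebra.Repr F h (H × H)) :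
    ∑ i ∈ r.index, counit (R := F) (r.left i) • r.right i = h := by
  have h1 := Coalgebra.sum_counit_tmul_eq (R := F) r
  calc ∑ i ∈ r.index, counit (R := F) (r.left i) • r.right i
      = ∑ i ∈ r.index, TensorProduct.lid F H
          (counit (R := F) (r.left i) ⊗ₜ[F] r.right i) := by
        simp only [TensorProduct.lid_tmul]
    _ = TensorProduct.lid F H (∑ i ∈ r.index,
          counit (R := F) (r.left i) ⊗ₜ[F] r.right i) := (map_sum _ _ _).symm
    _ = TensorProduct.lid F H ((1 : F) ⊗ₜ[F] h) := by rw [h1]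
    _ = h := by simp only [TensorProduct.lid_tmul, one_smul]

lemma repr_sum_right (h : H) (r : Coalgebra.Repr F h (H × H)) :
    ∑ i ∈ r.index, counit (R := F) (r.right i) • r.left i = h := by
  have h1 := Coalgebra.sum_tmul_counit_eq (R := F) r
  calc ∑ i ∈ r.index, counit (R := F) (r.right i) • r.left i
      = ∑ i ∈ r.index, TensorProduct.rid F H
          (r.left i ⊗ₜ[F] counit (R := F) (r.right i)) := by
        simp only [TensorProduct.rid_tmul]
    _ = TensorProduct.rid F H (∑ i ∈ r.index,
          r.left i ⊗ₜ[F] counit (R := F) (r.right i)) := (map_sum _ _ _).symm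
    _ = TensorProduct.rid F H (h ⊗ₜ[F] (1 : F)) := by rw [h1]
    _ = h := by simp only [TensorProduct.rid_tmul, one_smul]

lemma act_repr_left (h : H) (r : Coalgebra.Repr F h (H × H)) (x : D) :
    ha.act h x = ∑ i ∈ r.index, counit (R := F) (r.left i) • ha.act (r.right i) x := by
  conv_lhs => rw [← repr_sum_left h r]
  simp [map_sum]

lemma act_repr_right (h : H) (r : Coalgebra.Repr F h (H × H)) (x : D) :
    ha.act h x = ∑ i ∈ r.index, counit (R := F) (r.right i) • ha.act (r.left i) x := by
  conv_lhs => rw [← repr_sum_right h r]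
  simp [map_sum]

lemma counit_repr (h : H) (r : Coalgebra.Repr F h (H × H)) :
    ∑ i ∈ r.index, counit (R := F) (r.left i) * counit (R := F) (r.right i)
      = counit (R := F) h := by
  conv_rhs => rw [← repr_sum_left h r]
  simp [map_sum, smul_eq_mul]

lemma mem_invariants_iff {a : D} :
    a ∈ ha.invariants ↔ ∀ h : H, ha.act h a = counit (R := F) h • a := Iff.rfl

lemma one_mem_invariants : (1 : D) ∈ ha.invariants := by
  intro h
  rw [ha.act_one, Algebra.algebraMap_eq_smul_one]

lemma mul_mem_invariants {a b : D} (haa : a ∈ ha.invariants) (hbb : b ∈ ha.invariants) :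
    a * b ∈ ha.invariants := by
  intro h
  set r := ℛ F h with hr
  rw [act_mul_repr ha h r]
  calc ∑ i ∈ r.index, ha.act (r.left i) a * ha.act (r.right i) b
      = ∑ i ∈ r.index, (counit (R := F) (r.left i) * counit (R := F) (r.right i)) • (a * b) := by
        refine Finset.sum_congr rfl fun i _ => ?_
        rw [haa, hbb, smul_mul_smul_comm, mul_smul]
    _ = counit (R := F) h • (a * b) := by
        rw [← Finset.sum_smul, counit_repr h r]

/-- The invariants, as a subring. -/
def invSubring : Subring D where
  carrier := ha.invariants
  one_mem' := one_mem_invariants ha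
  mul_mem' := mul_mem_invariants ha
  zero_mem' := fun h => by simp
  add_mem' := fun {a b} haa hbb h => by
    rw [map_add, haa h, hbb h, smul_add]
  neg_mem' := fun {a} haa h => by
    rw [map_neg, haa h, smul_neg]

lemma act_mul_left_inv {s : D} (hs : s ∈ ha.invariants) (h : H) (x : D) :
    ha.act h (s * x) = s * ha.act h x := by
  set r := ℛ F h with hr
  rw [act_mul_repr ha h r, act_repr_left ha h r x, Finset.mul_sum]
  refine Finset.sum_congr rfl fun i _ => ?_
  rw [hs (r.left i), smul_mul_assoc, mul_smul_comm]

lemma act_mul_right_inv {s : D} (hs : s ∈ ha.invariants) (h : H) (x : D) :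
    ha.act h (x * s) = ha.act h x * s := by
  set r := ℛ F h with hr
  rw [act_mul_repr ha h r, act_repr_right ha h r x, Finset.sum_mul]
  refine Finset.sum_congr rfl fun i _ => ?_
  rw [hs (r.right i), mul_smul_comm, smul_mul_assoc]

end HopfAux

section HopfAux2

open Coalgebra MulOpposite

variable {F : Type} [Field F] {H : Type} [Ring H] [HopfAlgebra F H]
  {D : Type} [DivisionRing D] [Algebra F D] (ha : HopfAction F H D)

/-- The span of the action operators together with right multiplications. -/
noncomputable def actSpan : Submodule Dᵐᵒᵖ (D →ₗ[F] D) :=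
  Submodule.span Dᵐᵒᵖ (Set.range fun h : H => ha.act h)

lemma op_smul_apply (c : D) (f : D →ₗ[F] D) (x : D) : (op c • f) x = f x * c := rfl

lemma act_mem_actSpan (h : H) : ha.act h ∈ actSpan ha :=
  Submodule.subset_span ⟨h, rfl⟩

lemma id_mem_actSpan : LinearMap.id (R := F) (M := D) ∈ actSpan ha := by
  have : (LinearMap.id : D →ₗ[F] D) = ha.act 1 := by
    ext x; exact (ha.one_act x).symm
  rw [this]; exact act_mem_actSpan ha 1

lemma rightMul_mem_actSpan (c : D) :
    (op c • LinearMap.id : D →ₗ[F] D) ∈ actSpan ha :=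
  Submodule.smul_mem _ _ (id_mem_actSpan ha)

lemma act_comp_smul_act_mem (g : H) (c : D) (h : H) :
    (ha.act g) ∘ₗ (op c • ha.act h) ∈ actSpan ha := by
  set r := ℛ F g with hr
  have key : (ha.act g) ∘ₗ (op c • ha.act h)
      = ∑ i ∈ r.index, op (ha.act (r.right i) c) • ha.act (r.left i * h) := by
    ext x
    simp only [LinearMap.comp_apply, LinearMap.sum_apply, op_smul_apply]
    rw [act_mul_repr ha g r]
    refine Finset.sum_congr rfl fun i _ => ?_
    rw [ha.mul_act]
  rw [key]
  exact Submodule.sum_mem _ fun i _ =>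
    Submodule.smul_mem _ _ (act_mem_actSpan ha _)

lemma comp_smul_act_mem {e : D →ₗ[F] D} (he : e ∈ actSpan ha) (c : D) (h : H) :
    e ∘ₗ (op c • ha.act h) ∈ actSpan ha := by
  induction he using Submodule.span_induction with
  | mem f hf =>
      obtain ⟨g, rfl⟩ := hf
      exact act_comp_smul_act_mem ha g c h
  | zero => simpa using Submodule.zero_mem _
  | add f g _ _ hf hg => rw [LinearMap.add_comp]; exact Submodule.add_mem _ hf hg
  | smul a f _ hf => rw [LinearMap.smul_comp]; exact Submodule.smul_mem _ _ hf

lemma comp_mem_actSpan' {e₂ : D →ₗ[F] D} (h₂ : e₂ ∈ actSpan ha) :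
    ∀ e₁ ∈ actSpan ha, e₁ ∘ₗ e₂ ∈ actSpan ha := by
  induction h₂ using Submodule.span_induction with
  | mem f hf =>
      intro e₁ h₁
      obtain ⟨g, rfl⟩ := hf
      have : e₁ ∘ₗ ha.act g = e₁ ∘ₗ ((op (1:D)) • ha.act g) := by
        rw [op_one, one_smul]
      rw [this]
      exact comp_smul_act_mem ha h₁ 1 g
  | zero => intro e₁ h₁; simpa using Submodule.zero_mem _
  | add f g hf' hg' hf hg =>
      intro e₁ h₁
      rw [LinearMap.comp_add]; exact Submodule.add_mem _ (hf e₁ h₁) (hg e₁ h₁)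
  | smul a f hf' hf =>
      intro e₁ h₁
      have h1' : e₁ ∘ₗ (a • LinearMap.id) ∈ actSpan ha := by
        have hid : (a • LinearMap.id : D →ₗ[F] D) = op (unop a) • ha.act 1 := by
          rw [op_unop]
          congr 1
          ext x; exact (ha.one_act x).symm
        rw [hid]
        exact comp_smul_act_mem ha h₁ (unop a) 1
      have heq : e₁ ∘ₗ (a • f) = (e₁ ∘ₗ (a • LinearMap.id)) ∘ₗ f := by
        ext x
        simp only [LinearMap.comp_apply]
        induction a using MulOpposite.rec' with
        | _ a => rw [op_smul_apply, op_smul_apply, LinearMap.id_apply]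
      rw [heq]
      exact hf _ h1'

lemma comp_mem_actSpan {e₁ e₂ : D →ₗ[F] D} (h₁ : e₁ ∈ actSpan ha) (h₂ : e₂ ∈ actSpan ha) :
    e₁ ∘ₗ e₂ ∈ actSpan ha := comp_mem_actSpan' ha h₂ e₁ h₁

lemma actSpan_S_linear {e : D →ₗ[F] D} (he : e ∈ actSpan ha) {s : D}
    (hs : s ∈ ha.invariants) (x : D) : e (s * x) = s * e x := by
  induction he using Submodule.span_induction with
  | mem f hf =>
      obtain ⟨g, rfl⟩ := hf
      exact act_mul_left_inv ha hs g x
  | zero => simp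
  | add f g _ _ hf hg => simp [LinearMap.add_apply, hf, hg, mul_add]
  | smul a f _ hf =>
      induction a using MulOpposite.rec' with
      | _ a => rw [op_smul_apply, op_smul_apply, hf, mul_assoc]

end HopfAux2

section Density

open Coalgebra MulOpposite

variable {F : Type} [Field F] {H : Type} [Ring H] [HopfAlgebra F H]
  {D : Type} [DivisionRing D] [Algebra F D] (ha : HopfAction F H D)

lemma density (n : ℕ) : ∀ (x : Fin n → D) (v : D),
    v ∉ Submodule.span (invSubring ha) (Set.range x) →
    ∃ e ∈ actSpan ha, (∀ i, e (x i) = 0) ∧ e v ≠ 0 := by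
  induction n with
  | zero =>
      intro x v hv
      refine ⟨ha.act 1, act_mem_actSpan ha 1, fun i => i.elim0, ?_⟩
      rw [ha.one_act]
      intro h0
      exact hv (h0 ▸ Submodule.zero_mem _)
  | succ n IH =>
      intro x v hv
      set u := x (Fin.last n) with hu
      set W : Submodule (invSubring ha) D :=
        Submodule.span (invSubring ha) (Set.range (x ∘ Fin.castSucc)) with hW
      have hkill : ∀ e ∈ actSpan ha, (∀ i : Fin n, e (x i.castSucc) = 0) →
          ∀ w ∈ W, e w = 0 := by
        intro e he hgen w hw
        induction hw using Submodule.span_induction with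
        | mem y hy => obtain ⟨i, rfl⟩ := hy; exact hgen i
        | zero => simp
        | add a b _ _ h1 h2 => rw [map_add, h1, h2, add_zero]
        | smul s y _ h1 =>
            have hsy : (s • y : D) = s.1 * y := rfl
            rw [hsy, actSpan_S_linear ha he s.2, h1, mul_zero]
      have hWle : W ≤ Submodule.span (invSubring ha) (Set.range x) :=
        Submodule.span_mono (by rintro y ⟨i, rfl⟩; exact ⟨i.castSucc, rfl⟩)
      by_cases hu_mem : u ∈ W
      · have hv' : v ∉ W := fun hvW => hv (hWle hvW)
        obtain ⟨e, he, hgen, hev⟩ := IH (x ∘ Fin.castSucc) v hv'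
        refine ⟨e, he, ?_, hev⟩
        intro i
        refine Fin.lastCases ?_ (fun j => hgen j) i
        exact hkill e he hgen u hu_mem
      · by_cases hex : ∃ e ∈ actSpan ha,
            (∀ i : Fin n, e (x i.castSucc) = 0) ∧ e u = 0 ∧ e v ≠ 0
        · obtain ⟨e, he, hgen, heu, hev⟩ := hex
          exact ⟨e, he, fun i => Fin.lastCases heu hgen i, hev⟩
        · push_neg at hex
          exfalso
          obtain ⟨e₀, he₀, hgen₀, heu₀⟩ := IH (x ∘ Fin.castSucc) u hu_mem
          set e₁ := op ((e₀ u)⁻¹) • e₀ with he₁def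
          have he₁ : e₁ ∈ actSpan ha := Submodule.smul_mem _ _ he₀
          have hgen₁ : ∀ i : Fin n, e₁ (x i.castSucc) = 0 := by
            intro i
            have h0 := hgen₀ i
            simp only [Function.comp_apply] at h0
            rw [he₁def, op_smul_apply, h0, zero_mul]
          have he₁u : e₁ u = 1 := by
            rw [he₁def, op_smul_apply, mul_inv_cancel₀ heu₀]
          set t := e₁ v with ht
          have hclaim : ∀ e ∈ actSpan ha, (∀ i : Fin n, e (x i.castSucc) = 0) →
              e v = t * e u := by
            intro e he hgen
            have hdiff : (e - op (e u) • e₁) v = 0 := by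
              refine hex _ (Submodule.sub_mem _ he (Submodule.smul_mem _ _ he₁)) ?_ ?_
              · intro i
                rw [LinearMap.sub_apply, op_smul_apply, hgen i, hgen₁ i, zero_mul, sub_zero]
              · rw [LinearMap.sub_apply, op_smul_apply, he₁u, one_mul, sub_self]
            rw [LinearMap.sub_apply, op_smul_apply, sub_eq_zero] at hdiff
            exact hdiff
          have htS : t ∈ ha.invariants := by
            intro h
            have h1 : (ha.act h ∘ₗ e₁) v = t * ((ha.act h ∘ₗ e₁) u) := by
              refine hclaim _ (comp_mem_actSpan ha (act_mem_actSpan ha h) he₁) ?_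
              intro i
              rw [LinearMap.comp_apply, hgen₁ i, map_zero]
            rw [LinearMap.comp_apply, LinearMap.comp_apply, he₁u, ha.act_one] at h1
            rw [h1, Algebra.algebraMap_eq_smul_one, mul_smul_comm, mul_one]
          have hvtu : v - t * u ∈ W := by
            by_contra hnot
            obtain ⟨e, he, hgen, hne⟩ := IH (x ∘ Fin.castSucc) _ hnot
            apply hne
            rw [map_sub, actSpan_S_linear ha he htS u, hclaim e he hgen, sub_self]
          apply hv
          have hsplit : v = (v - t * u) + (⟨t, htS⟩ : invSubring ha) • u := by
            have : ((⟨t, htS⟩ : invSubring ha) • u : D) = t * u := rfl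
            rw [this, sub_add_cancel]
          rw [hsplit]
          exact Submodule.add_mem _ (hWle hvtu)
            (Submodule.smul_mem _ _ (Submodule.subset_span ⟨Fin.last n, rfl⟩))

end Density

section RankBound

open Coalgebra MulOpposite

variable {F : Type} [Field F] {H : Type} [Ring H] [HopfAlgebra F H]
  [FiniteDimensional F H]
  {D : Type} [DivisionRing D] [Algebra F D] (ha : HopfAction F H D)

/-- Evaluation at a point, as a `Dᵐᵒᵖ`-linear map. -/
noncomputable def evalAt (p : D) : (D →ₗ[F] D) →ₗ[Dᵐᵒᵖ] D where
  toFun f := f p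
  map_add' f g := rfl
  map_smul' c f := rfl

lemma fsmul_eq_op_smul (c : F) (f : D →ₗ[F] D) :
    c • f = op (algebraMap F D c) • f := by
  ext x
  show c • f x = f x * algebraMap F D c
  rw [Algebra.smul_def, Algebra.commutes]

lemma actSpan_le_span_basis :
    actSpan ha ≤ Submodule.span Dᵐᵒᵖ
      (Set.range fun i : Fin (Module.finrank F H) => ha.act (Module.finBasis F H i)) := by
  rw [actSpan, Submodule.span_le]
  rintro f ⟨h, rfl⟩
  set b := Module.finBasis F H with hb
  have hrepr : ha.act h = ∑ i, b.repr h i • ha.act (b i) := by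
    conv_lhs => rw [← b.sum_repr h]
    rw [map_sum]
    refine Finset.sum_congr rfl fun i _ => ?_
    rw [map_smul]
  show ha.act h ∈ _
  rw [hrepr]
  refine Submodule.sum_mem _ fun i _ => ?_
  rw [fsmul_eq_op_smul]
  exact Submodule.smul_mem _ _ (Submodule.subset_span ⟨i, rfl⟩)

/-- The opposite of a division ring, as a module over itself via the ambient ring. -/
noncomputable def opSelfEquiv : D ≃ₗ[Dᵐᵒᵖ] Dᵐᵒᵖ where
  toFun := op
  invFun := unop
  left_inv x := rfl
  right_inv x := rfl
  map_add' x y := rfl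
  map_smul' c x := by
    show op (x * unop c) = c * op x
    rw [← unop_op (x * unop c), unop_op]
    exact (op_mul x (unop c)) ▸ rfl

lemma rank_pi_op (k : ℕ) : Module.rank Dᵐᵒᵖ (Fin k → D) = k := by
  have e1 : (Fin k → D) ≃ₗ[Dᵐᵒᵖ] (Fin k → Dᵐᵒᵖ) :=
    LinearEquiv.piCongrRight fun _ => opSelfEquiv
  rw [e1.rank_eq, rank_fin_fun]

lemma not_linearIndependent (d : ℕ) (hd : Module.finrank F H = d)
    (B : Subring D) (hSB : (ha.invariants : Set D) ⊆ B)
    (x : Fin (d + 1) → D) : ¬ LinearIndependent B x := by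
  intro hli
  haveI : Nontrivial B := inferInstance
  -- the invariants-span is contained in the B-span
  have hspan_le : ∀ (X : Set D) (y : D),
      y ∈ Submodule.span (invSubring ha) X → y ∈ Submodule.span B X := by
    intro X y hy
    induction hy using Submodule.span_induction with
    | mem z hz => exact Submodule.subset_span hz
    | zero => exact Submodule.zero_mem _
    | add a b _ _ h1 h2 => exact Submodule.add_mem _ h1 h2
    | smul s z _ h1 =>
        have : (s • z : D) = (⟨s.1, hSB s.2⟩ : B) • z := rfl
        rw [this]
        exact Submodule.smul_mem _ _ h1
  have hnotin : ∀ i, x i ∉ Submodule.span (invSubring ha)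
      (Set.range (x ∘ (Fin.succAbove i))) := by
    intro i hmem
    have h1 : Set.range (x ∘ Fin.succAbove i) = x '' {i}ᶜ := by
      rw [Set.range_comp, Fin.range_succAbove]
    rw [h1] at hmem
    exact hli.notMem_span_image (by simp) (hspan_le _ _ hmem)
  -- choose operators
  choose e he hgen hne using fun i => density ha d (x ∘ Fin.succAbove i) (x i) (hnotin i)
  have hkill : ∀ i j, i ≠ j → (e i) (x j) = 0 := by
    intro i j hij
    obtain ⟨k, hk⟩ := Fin.exists_succAbove_eq hij.symm
    rw [← hk]
    exact hgen i k
  set Φ : (D →ₗ[F] D) →ₗ[Dᵐᵒᵖ] (Fin (d + 1) → D) :=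
    LinearMap.pi (fun j => evalAt (x j)) with hΦ
  have hsurj : ∀ y : Fin (d + 1) → D, ∃ f ∈ actSpan ha, Φ f = y := by
    intro y
    refine ⟨∑ i, op ((e i (x i))⁻¹ * y i) • e i,
      Submodule.sum_mem _ fun i _ => Submodule.smul_mem _ _ (he i), ?_⟩
    funext j
    show (∑ i, op ((e i (x i))⁻¹ * y i) • e i) (x j) = y j
    rw [LinearMap.sum_apply, Finset.sum_eq_single j]
    · rw [op_smul_apply, ← mul_assoc, mul_inv_cancel₀ (hne j), one_mul]
    · intro i _ hij
      rw [op_smul_apply, hkill i j hij, zero_mul]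
    · intro hj; exact absurd (Finset.mem_univ j) hj
  have htop : Submodule.span Dᵐᵒᵖ (Set.range (⇑Φ ∘
      fun i : Fin (Module.finrank F H) => ha.act (Module.finBasis F H i))) = ⊤ := by
    rw [eq_top_iff]
    rintro y -
    obtain ⟨f, hf, rfl⟩ := hsurj y
    have h1 : Φ f ∈ Submodule.map Φ (Submodule.span Dᵐᵒᵖ
        (Set.range fun i : Fin (Module.finrank F H) => ha.act (Module.finBasis F H i))) :=
      ⟨f, actSpan_le_span_basis ha hf, rfl⟩
    rw [Submodule.map_span, ← Set.range_comp] at h1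
    exact h1
  have hle : (Module.rank Dᵐᵒᵖ (Fin (d + 1) → D)) ≤ (Module.finrank F H : Cardinal) := by
    rw [← rank_top Dᵐᵒᵖ, ← htop]
    refine le_trans (rank_span_le _) ?_
    refine le_trans Cardinal.mk_range_le ?_
    simp
  rw [rank_pi_op, hd] at hle
  have : (d + 1 : ℕ) ≤ d := by exact_mod_cast hle
  omega

lemma rank_le_of_invariants (d : ℕ) (hd : Module.finrank F H = d)
    (B : Subring D) (hSB : (ha.invariants : Set D) ⊆ B) :
    Module.rank B D ≤ d := by
  refine rank_le fun s hs => ?_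
  by_contra hlt
  push_neg at hlt
  have hcard : d + 1 ≤ Fintype.card s := by
    rw [Fintype.card_coe]; omega
  have hcard2 : Fintype.card (Fin (d + 1)) ≤ Fintype.card s := by
    rwa [Fintype.card_fin]
  obtain ⟨emb⟩ := Function.Embedding.nonempty_of_card_le hcard2
  exact not_linearIndependent ha d hd B hSB (fun i : Fin (d + 1) => ((emb i : s) : D))
    (hs.comp emb emb.injective)

end RankBound

section Trivial

open Coalgebra MulOpposite

variable (F : Type) [Field F] {H : Type} [Ring H] [HopfAlgebra F H]
  [FiniteDimensional F H]
  {D : Type} [DivisionRing D] [Algebra F D] (ha : HopfAction F H D)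

lemma one_ne_zero_H [HopfAlgebra F H] : (1 : H) ≠ 0 := by
  intro h10
  have h1 : (Coalgebra.counit (R := F) (1 : H)) = 1 := Bialgebra.counit_one
  rw [h10, map_zero] at h1
  exact (one_ne_zero : (1 : F) ≠ 0) h1.symm

lemma invariants_eq_univ (hd1' : Module.finrank F H = 1) :
    ha.invariants = Set.univ := by
  have hd1 : Module.finrank F H = 1 := hd1'
  have hspan : Submodule.span F ({(1 : H)} : Set H) = ⊤ := by
    apply Submodule.eq_top_of_finrank_eq
    rw [finrank_span_singleton (one_ne_zero_H F), hd1]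
  ext a
  simp only [Set.mem_univ, iff_true]
  intro h
  have hh : h ∈ Submodule.span F ({(1 : H)} : Set H) := hspan ▸ Submodule.mem_top
  obtain ⟨c, hc⟩ := Submodule.mem_span_singleton.mp hh
  rw [← hc, map_smul, map_smul, LinearMap.smul_apply, ha.one_act]
  congr 1
  rw [Bialgebra.counit_one, smul_eq_mul, mul_one]

end Trivial

set_option maxHeartbeats 1000000 in
set_option synthInstance.maxHeartbeats 200000 in
/-- Let `H` be a Hopf algebra of dimension `d` over an algebraically closed field `F` and
`D` an `H`-module division algebra of degree `m` with `gcd(d!, m) = 1`.  Then the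
centralizer of `Dᴴ` in `D` equals the center `Z` of `D`. -/
theorem centralizer_of_invariants_eq_center
    (F : Type) [Field F] [IsAlgClosed F]
    (H : Type) [Ring H] [HopfAlgebra F H] [FiniteDimensional F H]
    (D : Type) [DivisionRing D] [Algebra F D]
    (d m : ℕ) (hd : Module.finrank F H = d)
    (hm : Module.finrank (Subalgebra.center F D) D = m ^ 2)
    (hcop : Nat.Coprime d.factorial m)
    (ha : HopfAction F H D) :
    Subring.centralizer ha.invariants = Subring.center D := by
  have hdne : d ≠ 0 := by
    rintro rfl
    have : Subsingleton H := Module.finrank_zero_iff.mp hd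
    exact one_ne_zero_H F (H := H) (Subsingleton.elim _ _)
  by_cases hm0 : m = 0
  · -- trivial case : d ≤ 1, hence d = 1 and the action is trivial
    subst hm0
    have hfac : d.factorial = 1 := by simpa [Nat.coprime_zero_right] using hcop
    have hd1 : d = 1 := by
      have := Nat.self_le_factorial d
      omega
    rw [invariants_eq_univ F ha (hd1 ▸ hd), Subring.centralizer_univ]
  · -- main case
    have hm1 : 0 < m := Nat.pos_of_ne_zero hm0
    set Z : Subring D := Subring.center D with hZdef
    letI : Field Z := inferInstanceAs (Field (Subring.center D))
    letI algZD : Algebra Z D :=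
      { smul := (· • ·)
        algebraMap := Subring.subtype Z
        commutes' := fun z x => (Subring.mem_center_iff.mp z.2 x).symm
        smul_def' := fun z x => rfl }
    -- transfer the finrank hypothesis to `Z`
    have hmZ : Module.finrank Z D = m ^ 2 := by
      rw [← hm]
      have hr : Module.rank (Subalgebra.center F D) D = Module.rank Z D := by
        set i : ZeroHom (Subalgebra.center F D) Z :=
          ⟨fun z => (⟨z.1, Subring.mem_center_iff.mpr
              (Subalgebra.mem_center_iff.mp z.2)⟩ : Z), rfl⟩ with hidef
        refine rank_eq_of_equiv_equiv i (AddEquiv.refl D) ⟨?_, ?_⟩ ?_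
        · intro a b hab
          exact Subtype.ext (congrArg Subtype.val hab)
        · rintro ⟨w, hw⟩
          exact ⟨⟨w, Subalgebra.mem_center_iff.mpr (Subring.mem_center_iff.mp hw)⟩, rfl⟩
        · intro r x
          rfl
      unfold Module.finrank
      rw [hr]
    haveI hfdZ : FiniteDimensional Z D :=
      FiniteDimensional.of_finrank_pos (by rw [hmZ]; positivity)
    haveI : Algebra.IsIntegral Z D := Algebra.IsIntegral.of_finite Z D
    set B : Subring D := Subring.closure ((Z : Set D) ∪ ha.invariants) with hBdef
    have hZB : (Z : Set D) ⊆ (B : Set D) :=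
      subset_trans Set.subset_union_left Subring.subset_closure
    have hSB : (ha.invariants : Set D) ⊆ (B : Set D) :=
      subset_trans Set.subset_union_right Subring.subset_closure
    -- B is closed under inverses
    have hBinv : ∀ x : D, x ∈ B → x ≠ 0 → x⁻¹ ∈ B := by
      intro x hxB hx0
      have hint : IsIntegral Z x := Algebra.IsIntegral.isIntegral x
      set p := minpoly Z x with hp
      have hcoef : p.coeff 0 ≠ 0 := minpoly.coeff_zero_ne_zero hint hx0
      have haeval : Polynomial.aeval x p = 0 := minpoly.aeval Z x
      have hsplit : x * Polynomial.aeval x p.divX + algebraMap Z D (p.coeff 0) = 0 := by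
        have h2 := congrArg (Polynomial.aeval x) (Polynomial.X_mul_divX_add p)
        rw [map_add, map_mul, Polynomial.aeval_X, Polynomial.aeval_C] at h2
        rw [h2]; exact haeval
      have hcne : (-(algebraMap Z D (p.coeff 0))) ≠ 0 := by
        simp only [ne_eq, neg_eq_zero]
        intro h0
        apply hcoef
        exact Subtype.ext h0
      have hxq : x * (Polynomial.aeval x p.divX * (-(algebraMap Z D (p.coeff 0)))⁻¹) = 1 := by
        rw [← mul_assoc, eq_neg_of_add_eq_zero_left hsplit, mul_inv_cancel₀ hcne]
      have hxinv : x⁻¹ = Polynomial.aeval x p.divX * (-(algebraMap Z D (p.coeff 0)))⁻¹ :=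
        inv_eq_of_mul_eq_one_right hxq
      rw [hxinv]
      refine Subring.mul_mem _ ?_ ?_
      · -- polynomial evaluation stays in B
        have hpoly : ∀ q : Polynomial Z, Polynomial.aeval x q ∈ B := by
          intro q
          induction q using Polynomial.induction_on' with
          | add a b h1 h2 => rw [map_add]; exact Subring.add_mem _ h1 h2
          | monomial n a =>
              rw [Polynomial.aeval_monomial]
              exact Subring.mul_mem _ (hZB a.2) (Subring.pow_mem _ hxB n)
        exact hpoly _
      · -- the inverse of a central element is central
        have hzc : (-(algebraMap Z D (p.coeff 0))) ∈ Z :=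
          Subring.neg_mem _ (show algebraMap Z D (p.coeff 0) ∈ Z from (p.coeff 0).2)
        have hinv : (-(algebraMap Z D (p.coeff 0)))⁻¹ ∈ Z := by
          rw [Subring.mem_center_iff]
          intro g
          exact (Commute.inv_right₀ (Subring.mem_center_iff.mp hzc g)).eq
        exact hZB hinv
    -- B is a division ring
    letI := Classical.decEq D
    letI divB : DivisionRing B :=
      { (inferInstance : Ring B) with
        inv := fun x => if hx : (x : D) = 0 then 0 else ⟨(x : D)⁻¹, hBinv x.1 x.2 hx⟩
        mul_inv_cancel := by
          intro a ha0
          have hva : (a : D) ≠ 0 := fun h => ha0 (Subtype.ext h)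
          apply Subtype.ext
          simp only [dif_neg hva]
          exact mul_inv_cancel₀ hva
        inv_zero := by simp
        nnqsmul := _
        nnqsmul_def := fun _ _ => rfl
        qsmul := _
        qsmul_def := fun _ _ => rfl }
    have hZBle : Z ≤ B := hZB
    letI modZB : Module Z B := Module.compHom B ((Subring.inclusion hZBle) : Z →+* B)
    letI towZBD : IsScalarTower Z B D :=
      ⟨fun z b x => by
        show ((Subring.inclusion hZBle z * b : B) : D) * x = (z : D) * ((b : D) * x)
        push_cast
        rw [mul_assoc]
        rfl⟩
    -- the tower formula and the rank bound
    have hrankB : Module.rank B D ≤ (d : Cardinal) := rank_le_of_invariants ha d hd B hSB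
    haveI hfinBD : FiniteDimensional B D := Module.Finite.right Z B D
    have hfrB : Module.finrank B D ≤ d := Module.finrank_le_of_rank_le hrankB
    have htower : Module.finrank Z B * Module.finrank B D = Module.finrank Z D :=
      Module.finrank_mul_finrank Z B D
    set t := Module.finrank B D with htdef
    have hm2 : Module.finrank Z B * t = m ^ 2 := by rw [htower, hmZ]
    have ht0 : t ≠ 0 := by
      intro h0
      rw [h0, mul_zero] at hm2
      exact (pow_ne_zero 2 hm0) hm2.symm
    have ht1 : t = 1 := by
      by_contra hne
      obtain ⟨p, hp, hpt⟩ := Nat.exists_prime_and_dvd hne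
      have hpm2 : p ∣ m ^ 2 := hpt.trans (Dvd.intro_left _ hm2)
      have hpm : p ∣ m := hp.dvd_of_dvd_pow hpm2
      have hpd : p ≤ d := le_trans (Nat.le_of_dvd (Nat.pos_of_ne_zero ht0) hpt) hfrB
      have hpg : p ∣ Nat.gcd d.factorial m :=
        Nat.dvd_gcd (Nat.dvd_factorial hp.pos hpd) hpm
      rw [Nat.Coprime] at hcop
      rw [hcop] at hpg
      exact hp.one_lt.ne' (Nat.dvd_one.mp hpg)
    -- B = D
    have hBtop : ∀ x : D, x ∈ B := by
      have hspan1 : Submodule.span B ({(1 : D)} : Set D) = ⊤ := by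
        apply Submodule.eq_top_of_finrank_eq
        rw [finrank_span_singleton (one_ne_zero (α := D)), ← htdef, ht1]
      intro x
      have hx : x ∈ Submodule.span B ({(1 : D)} : Set D) := hspan1 ▸ Submodule.mem_top
      obtain ⟨b, hb⟩ := Submodule.mem_span_singleton.mp hx
      rw [← hb]
      show (b : D) * 1 ∈ B
      rw [mul_one]
      exact b.2
    -- conclude
    apply le_antisymm
    · intro c hc
      rw [Subring.mem_center_iff]
      intro g
      have hgB : g ∈ Subring.closure ((Z : Set D) ∪ ha.invariants) := hBtop g
      induction hgB using Subring.closure_induction with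
      | mem x hx =>
          rcases hx with hx | hx
          · exact (Subring.mem_center_iff.mp hx c).symm
          · exact Subring.mem_centralizer_iff.mp hc x hx
      | zero => rw [zero_mul, mul_zero]
      | one => rw [one_mul, mul_one]
      | add x y hx hy h1 h2 => rw [add_mul, mul_add, h1, h2]
      | neg x hx h1 => rw [neg_mul, mul_neg, h1]
      | mul x y hx hy h1 h2 => rw [mul_assoc, h2, ← mul_assoc, h1, mul_assoc]
    · intro c hc
      rw [Subring.mem_centralizer_iff]
      intro g _
      exact Subring.mem_center_iff.mp hc g
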